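/- In the uniform diagonal construction on the bi-tree there are absolute constants C, c > 0 such that for every integer M ≥ 1 there exists n₀ with the property: for every power of two n ≥ n₀, ∑_{α∈T² : V^μ(α) ≤ C·n·2^{−M}} (𝕀*μ(α))² ≥ c·2^{−M}·n·log₂ n. -/

import Mathlib

open Finset

def strings : ℕ → Finset (List Bool)
  | 0 => {([] : List Bool)}
  | N + 1 =>
      {([] : List Bool)} ∪ (strings N).image (List.cons true) ∪ (strings N).image (List.cons false)

/-- Vertices of the bi-tree `T²` of depth `N`: pairs of binary strings of length at most `N`,
ordered by `(α,β) ≤ (α',β')` iff `α' <+: α` and `β' <+: β`. -/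
def biVertices (N : ℕ) : Finset (List Bool × List Bool) := strings N ×ˢ strings N

/-- `𝕀 f (p) = ∑_{p' ≥ p} f p'`. -/
noncomputable def biI (N : ℕ) (f : List Bool × List Bool → ℝ) (p : List Bool × List Bool) : ℝ :=
  ∑ q ∈ (biVertices N).filter (fun q => q.1 <+: p.1 ∧ q.2 <+: p.2), f q

/-- `𝕀* f (p) = ∑_{p' ≤ p} f p'`. -/
noncomputable def biIstar (N : ℕ) (f : List Bool × List Bool → ℝ) (p : List Bool × List Bool) : ℝ :=
  ∑ q ∈ (biVertices N).filter (fun q => p.1 <+: q.1 ∧ p.2 <+: q.2), f q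

/-- The potential `V^μ = 𝕀 (𝕀* μ)` on the bi-tree. -/
noncomputable def biV (N : ℕ) (μ : List Bool × List Bool → ℝ) : List Bool × List Bool → ℝ :=
  biI N (biIstar N μ)

/-- The total mass `|μ|`. -/
noncomputable def biMass (N : ℕ) (μ : List Bool × List Bool → ℝ) : ℝ :=
  ∑ p ∈ biVertices N, μ p

/-- A measure on the boundary `∂T²`: a nonnegative function vanishing off pairs of strings
both of length exactly `N`. -/
def IsBiMeasureOnBoundary (N : ℕ) (μ : List Bool × List Bool → ℝ) : Prop :=
  (∀ p, 0 ≤ μ p) ∧ ∀ p, μ p ≠ 0 → p.1.length = N ∧ p.2.length = N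

/-- The energy `E[ν] = ∑_{α∈T²} (𝕀*ν(α))²`. -/
noncomputable def biEnergy (N : ℕ) (ν : List Bool × List Bool → ℝ) : ℝ :=
  ∑ p ∈ biVertices N, (biIstar N ν p) ^ 2

/-- The partial energy `E_ε[ν] = ∑_{α∈T² : V^ν(α) ≤ ε} (𝕀*ν(α))²`. -/
noncomputable def biPartialEnergy (N : ℕ) (ν : List Bool × List Bool → ℝ) (ε : ℝ) : ℝ :=
  ∑ p ∈ (biVertices N).filter (fun p => biV N ν p ≤ ε), (biIstar N ν p) ^ 2

/-- `cap(E) = inf { ∑ f² : f ≥ 0, 𝕀f ≥ 1 on E }` on the bi-tree of depth `N`. -/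
noncomputable def biCap (N : ℕ) (E : Set (List Bool × List Bool)) : ℝ :=
  sInf { t : ℝ | ∃ f : List Bool × List Bool → ℝ, (∀ p, 0 ≤ f p) ∧
    (∀ p ∈ E, 1 ≤ biI N f p) ∧ t = ∑ p ∈ biVertices N, (f p) ^ 2 }

/-- Superadditivity in each variable on the bi-tree of depth `N`. -/
def BiSuperadditive (N : ℕ) (g : List Bool × List Bool → ℝ) : Prop :=
  (∀ α β : List Bool, α.length < N → β.length ≤ N →
    g (α ++ [false], β) + g (α ++ [true], β) ≤ g (α, β)) ∧
  (∀ α β : List Bool, α.length ≤ N → β.length < N →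
    g (α, β ++ [false]) + g (α, β ++ [true]) ≤ g (α, β))

/-- Uniform diagonal construction: on the bi-tree of depth `N = n + M` with `n = 2^m`,
the probability measure `μ` puts mass `2^{−M}` at each point `ω_a = (a0ⁿ, a0ⁿ)`,
`a` a binary string of length `M`. -/
noncomputable def unifMu (M m : ℕ) : List Bool × List Bool → ℝ := fun p =>
  if p.1 = p.2 ∧ p.1.length = 2 ^ m + M ∧ p.1.drop M = List.replicate (2 ^ m) false
  then 1 / (2 : ℝ) ^ M else 0

namespace Stmt19Aux
open List

lemma mem_strings : ∀ {N : ℕ} {l : List Bool}, l ∈ strings N ↔ l.length ≤ N := by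
  intro N
  induction N with
  | zero =>
    intro l
    simp [strings, Nat.le_zero, List.length_eq_zero_iff]
  | succ N ih =>
    intro l
    cases l with
    | nil => simp [strings]
    | cons b t =>
      simp only [strings, Finset.mem_union, Finset.mem_singleton, Finset.mem_image,
        List.length_cons]
      constructor
      · rintro ((h | ⟨u, hu, h⟩) | ⟨u, hu, h⟩)
        · exact absurd h (by simp)
        · cases h; exact Nat.succ_le_succ (ih.1 hu)
        · cases h; exact Nat.succ_le_succ (ih.1 hu)
      · intro h
        cases b
        · exact Or.inr ⟨t, ih.2 (Nat.succ_le_succ_iff.1 h), rfl⟩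
        · exact Or.inl (Or.inr ⟨t, ih.2 (Nat.succ_le_succ_iff.1 h), rfl⟩)

/-- All lists of length `K`. -/
def lenLists (K : ℕ) : Finset (List Bool) :=
  Finset.univ.image (fun f : Fin K → Bool => List.ofFn f)

lemma mem_lenLists {K : ℕ} {l : List Bool} (h : l.length = K) : l ∈ lenLists K := by
  subst h
  exact Finset.mem_image.2 ⟨l.get, Finset.mem_univ _, List.ofFn_get l⟩

lemma length_of_mem_lenLists {K : ℕ} {l : List Bool} (h : l ∈ lenLists K) : l.length = K := by
  obtain ⟨f, -, rfl⟩ := Finset.mem_image.1 h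
  simp

lemma card_lenLists (K : ℕ) : (lenLists K).card = 2 ^ K := by
  rw [lenLists, Finset.card_image_of_injective _ List.ofFn_injective]
  simp

lemma unifMu_nonneg (M m : ℕ) (p : List Bool × List Bool) : 0 ≤ unifMu M m p := by
  unfold unifMu; split <;> positivity

lemma unifMu_le (M m : ℕ) (p : List Bool × List Bool) : unifMu M m p ≤ (1 / 2 : ℝ) ^ M := by
  unfold unifMu
  split
  · rw [div_pow, one_pow]
  · positivity

/-- Upper bound for `𝕀*μ`. -/
lemma biIstar_le (M m : ℕ) (α β : List Bool) :
    biIstar (2 ^ m + M) (unifMu M m) (α, β) ≤ (1 / 2 : ℝ) ^ (min (max α.length β.length) M) := by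
  classical
  set N := 2 ^ m + M with hN
  set r := min (max α.length β.length) M with hr
  have hrM : r ≤ M := min_le_right _ _
  set F := (biVertices N).filter (fun q => α <+: q.1 ∧ β <+: q.2) with hF
  set F' := F.filter (fun q => unifMu M m q ≠ 0) with hF'
  have h1 : biIstar N (unifMu M m) (α, β) = ∑ q ∈ F', unifMu M m q := by
    rw [biIstar, hF', hF]
    exact (Finset.sum_filter_ne_zero _).symm
  -- key properties of members of F'
  have hprop : ∀ q ∈ F', q.1 = q.2 ∧ q.1.length = 2 ^ m + M ∧
      q.1.drop M = List.replicate (2 ^ m) false ∧ α <+: q.1 ∧ β <+: q.2 := by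
    intro q hq
    rw [hF', Finset.mem_filter] at hq
    obtain ⟨hqF, hne⟩ := hq
    rw [hF, Finset.mem_filter] at hqF
    refine ⟨?_, ?_, ?_, hqF.2.1, hqF.2.2⟩ <;>
    · by_contra hcon
      apply hne
      unfold unifMu
      rw [if_neg]
      tauto
  have htake : ∀ q ∈ F', ∀ q' ∈ F', q.1.take r = q'.1.take r := by
    have key : ∀ q ∈ F', q.1.take r =
        (if β.length ≤ α.length then α else β).take r := by
      intro q hq
      obtain ⟨hd, hlen, -, hα, hβ⟩ := hprop q hq
      have hrlen : r ≤ q.1.length := by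
        rw [hlen]; exact le_trans hrM (Nat.le_add_left M (2 ^ m))
      split
      · next h =>
        have hra : r ≤ α.length := by
          rw [hr, max_eq_left h]; exact min_le_left _ _
        have hpre : α.take r <+: q.1.take r := hα.take r
        refine (hpre.eq_of_length ?_).symm
        rw [List.length_take, List.length_take, min_eq_left hra, min_eq_left (le_trans hra hα.length_le)]
      · next h =>
        have hrb : r ≤ β.length := by
          rw [hr, max_eq_right (le_of_not_ge h)]; exact min_le_left _ _
        have hpre : β.take r <+: q.2.take r := hβ.take r
        rw [← hd] at hpre
        refine (hpre.eq_of_length ?_).symm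
        have hq2 : r ≤ q.2.length := by rw [← hd]; exact hrlen
        rw [List.length_take, List.length_take, min_eq_left hrb, min_eq_left hrlen]
    intro q hq q' hq'
    rw [key q hq, key q' hq']
  have hcard : F'.card ≤ 2 ^ (M - r) := by
    rw [← card_lenLists]
    apply Finset.card_le_card_of_injOn (fun q => (q.1.take M).drop r)
    · intro q hq
      obtain ⟨-, hlen, -, -, -⟩ := hprop q hq
      apply mem_lenLists
      rw [List.length_drop, List.length_take, hlen, min_eq_left (Nat.le_add_left M (2 ^ m))]
    · intro q hq q' hq' heq
      obtain ⟨hd, hlen, hdrop, -, -⟩ := hprop q (Finset.mem_coe.1 hq)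
      obtain ⟨hd', hlen', hdrop', -, -⟩ := hprop q' (Finset.mem_coe.1 hq')
      have heq' : (q.1.take M).drop r = (q'.1.take M).drop r := heq
      have htk := htake q (Finset.mem_coe.1 hq) q' (Finset.mem_coe.1 hq')
      have h2 : q.1.take M = q'.1.take M := by
        have e1 : (q.1.take M).take r = (q'.1.take M).take r := by
          rw [List.take_take, List.take_take, min_eq_left hrM, htk]
        calc q.1.take M = (q.1.take M).take r ++ (q.1.take M).drop r :=
              (List.take_append_drop _ _).symm
          _ = (q'.1.take M).take r ++ (q'.1.take M).drop r := by rw [e1, heq']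
          _ = q'.1.take M := List.take_append_drop _ _
      have h3 : q.1 = q'.1 := by
        calc q.1 = q.1.take M ++ q.1.drop M := (List.take_append_drop _ _).symm
          _ = q'.1.take M ++ q'.1.drop M := by rw [h2, hdrop, hdrop']
          _ = q'.1 := List.take_append_drop _ _
      have h4 : q.2 = q'.2 := by rw [← hd, ← hd', h3]
      exact Prod.ext h3 h4
  calc biIstar N (unifMu M m) (α, β) = ∑ q ∈ F', unifMu M m q := h1
    _ ≤ F'.card • ((1 / 2 : ℝ) ^ M) := Finset.sum_le_card_nsmul _ _ _ (fun q _ => unifMu_le M m q)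
    _ = (F'.card : ℝ) * (1 / 2 : ℝ) ^ M := nsmul_eq_mul _ _
    _ ≤ (2 : ℝ) ^ (M - r) * (1 / 2 : ℝ) ^ M := by
        apply mul_le_mul_of_nonneg_right _ (by positivity)
        exact_mod_cast hcard
    _ = (1 / 2 : ℝ) ^ r := by
        have hM : M = (M - r) + r := (Nat.sub_add_cancel hrM).symm
        nth_rewrite 2 [hM]
        rw [pow_add, ← mul_assoc, ← mul_pow]
        norm_num

/-- Lower bound for `𝕀*μ` at a diagonal grid point. -/
lemma biIstar_ge (M m : ℕ) (a : List Bool) (ha : a.length = M) {j k : ℕ}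
    (hj : j ≤ 2 ^ m) (hk : k ≤ 2 ^ m) :
    (1 / 2 : ℝ) ^ M ≤ biIstar (2 ^ m + M) (unifMu M m)
      (a ++ List.replicate j false, a ++ List.replicate k false) := by
  classical
  set N := 2 ^ m + M with hN
  set ω : List Bool × List Bool :=
    (a ++ List.replicate (2 ^ m) false, a ++ List.replicate (2 ^ m) false) with hω
  have hωlen : (a ++ List.replicate (2 ^ m) false).length = 2 ^ m + M := by
    simp [ha]; omega
  have hpre : ∀ i : ℕ, i ≤ 2 ^ m →
      a ++ List.replicate i false <+: a ++ List.replicate (2 ^ m) false := by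
    intro i hi
    refine ⟨List.replicate (2 ^ m - i) false, ?_⟩
    rw [List.append_assoc, ← List.replicate_add]
    congr 2
    omega
  have hmem : ω ∈ (biVertices N).filter
      (fun q => (a ++ List.replicate j false) <+: q.1 ∧
        (a ++ List.replicate k false) <+: q.2) := by
    rw [Finset.mem_filter]
    refine ⟨?_, hpre j hj, hpre k hk⟩
    rw [biVertices, Finset.mem_product]
    constructor <;> · rw [mem_strings, hωlen]
  have hval : unifMu M m ω = (1 / 2 : ℝ) ^ M := by
    unfold unifMu
    rw [if_pos, div_pow, one_pow]
    refine ⟨rfl, hωlen, ?_⟩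
    have := @List.drop_left _ a (List.replicate (2 ^ m) false)
    rw [ha] at this
    exact this
  calc (1 / 2 : ℝ) ^ M = unifMu M m ω := hval.symm
    _ ≤ _ := Finset.single_le_sum (fun q _ => unifMu_nonneg M m q) hmem

/-- Finset of prefixes of `l`. -/
def prefFin (l : List Bool) : Finset (List Bool) :=
  (Finset.range (l.length + 1)).image (fun i => l.take i)

lemma mem_prefFin {l q : List Bool} : q ∈ prefFin l ↔ q <+: l := by
  simp only [prefFin, Finset.mem_image, Finset.mem_range]
  constructor
  · rintro ⟨i, -, rfl⟩
    exact List.take_prefix i l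
  · intro h
    exact ⟨q.length, Nat.lt_succ_of_le h.length_le, (List.prefix_iff_eq_take.1 h).symm⟩

lemma sum_prefFin (l : List Bool) (h : List Bool → ℝ) :
    ∑ q ∈ prefFin l, h q = ∑ i ∈ Finset.range (l.length + 1), h (l.take i) := by
  rw [prefFin, Finset.sum_image]
  intro i hi j hj hij
  rw [Finset.mem_coe, Finset.mem_range] at hi hj
  have := congrArg List.length hij
  rw [List.length_take, List.length_take] at this
  omega

lemma sqrt2inv_le : (Real.sqrt 2)⁻¹ ≤ 3 / 4 := by
  rw [inv_le_iff_one_le_mul₀ (by positivity)]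
  nlinarith [Real.sq_sqrt (show (0:ℝ) ≤ 2 by norm_num), Real.sqrt_nonneg 2]

lemma sqrt2inv_nonneg : (0:ℝ) ≤ (Real.sqrt 2)⁻¹ := by positivity

lemma geom_bound (K : ℕ) : ∑ i ∈ Finset.range K, ((Real.sqrt 2)⁻¹) ^ i ≤ 4 := by
  have h1 : ∑ i ∈ Finset.range K, ((Real.sqrt 2)⁻¹) ^ i ≤
      ∑ i ∈ Finset.range K, ((3:ℝ)/4) ^ i := by
    apply Finset.sum_le_sum
    intro i _
    exact pow_le_pow_left₀ sqrt2inv_nonneg sqrt2inv_le i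
  have h2 : ∑ i ∈ Finset.range K, ((3:ℝ)/4) ^ i = (1 - (3/4:ℝ)^K) * 4 := by
    rw [geom_sum_eq (by norm_num)]
    ring
  have h3 : (0:ℝ) ≤ (3/4:ℝ)^K := by positivity
  linarith

lemma pointwise_bound (M i i' : ℕ) :
    (1 / 2 : ℝ) ^ (min (max i i') M) ≤
      (1 / 2 : ℝ) ^ M + ((Real.sqrt 2)⁻¹) ^ i * ((Real.sqrt 2)⁻¹) ^ i' := by
  have hs2 : ((Real.sqrt 2)⁻¹) ^ 2 = (1/2 : ℝ) := by
    rw [inv_pow, Real.sq_sqrt (by norm_num : (0:ℝ) ≤ 2)]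
    norm_num
  rcases le_total (max i i') M with h | h
  · rw [min_eq_left h]
    have key : (1 / 2 : ℝ) ^ (max i i') ≤ ((Real.sqrt 2)⁻¹) ^ i * ((Real.sqrt 2)⁻¹) ^ i' := by
      rw [← hs2, ← pow_mul, ← pow_add]
      exact pow_le_pow_of_le_one sqrt2inv_nonneg
        (by rw [inv_le_one_iff₀]; right; exact Real.one_le_sqrt.2 (by norm_num))
        (by rcases max_cases i i' with ⟨he, hle⟩ | ⟨he, hle⟩ <;> omega)
    have : (0:ℝ) ≤ (1/2:ℝ)^M := by positivity
    linarith
  · rw [min_eq_right h]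
    have : (0:ℝ) ≤ ((Real.sqrt 2)⁻¹) ^ i * ((Real.sqrt 2)⁻¹) ^ i' := by positivity
    linarith

/-- Upper bound for the potential at a diagonal grid point. -/
lemma biV_le (M m : ℕ) (hM : 2 ^ (M + 4) ≤ 2 ^ m) (a : List Bool) (ha : a.length = M)
    {j k : ℕ} (hj : j ≤ 2 ^ m) (hk : k ≤ 2 ^ m)
    (hjk : (M + j + 1) * (M + k + 1) ≤ 2 ^ m) :
    biV (2 ^ m + M) (unifMu M m)
      (a ++ List.replicate j false, a ++ List.replicate k false) ≤
      2 * (2:ℝ) ^ m / (2:ℝ) ^ M := by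
  classical
  set N := 2 ^ m + M with hN
  set l₁ := a ++ List.replicate j false with hl₁
  set l₂ := a ++ List.replicate k false with hl₂
  have hlen₁ : l₁.length = M + j := by simp [hl₁, ha]
  have hlen₂ : l₂.length = M + k := by simp [hl₂, ha]
  have hFeq : (biVertices N).filter (fun q => q.1 <+: l₁ ∧ q.2 <+: l₂) =
      prefFin l₁ ×ˢ prefFin l₂ := by
    ext q
    rw [Finset.mem_filter, Finset.mem_product, mem_prefFin, mem_prefFin]
    constructor
    · rintro ⟨-, h1, h2⟩; exact ⟨h1, h2⟩
    · rintro ⟨h1, h2⟩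
      refine ⟨?_, h1, h2⟩
      rw [biVertices, Finset.mem_product, mem_strings, mem_strings]
      constructor
      · calc q.1.length ≤ l₁.length := h1.length_le
          _ ≤ N := by rw [hlen₁, hN]; omega
      · calc q.2.length ≤ l₂.length := h2.length_le
          _ ≤ N := by rw [hlen₂, hN]; omega
  have hexp : biV N (unifMu M m) (l₁, l₂) =
      ∑ i ∈ Finset.range (M + j + 1), ∑ i' ∈ Finset.range (M + k + 1),
        biIstar N (unifMu M m) (l₁.take i, l₂.take i') := by
    rw [biV, biI]
    dsimp only
    rw [hFeq, Finset.sum_product]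
    rw [← hlen₁, sum_prefFin l₁ (fun x => ∑ y ∈ prefFin l₂, biIstar N (unifMu M m) (x, y))]
    apply Finset.sum_congr rfl
    intro i _
    rw [← hlen₂, sum_prefFin l₂ (fun y => biIstar N (unifMu M m) (l₁.take i, y))]
  rw [hexp]
  have hbound : ∀ i ∈ Finset.range (M + j + 1), ∀ i' ∈ Finset.range (M + k + 1),
      biIstar N (unifMu M m) (l₁.take i, l₂.take i') ≤
        (1 / 2 : ℝ) ^ M + ((Real.sqrt 2)⁻¹) ^ i * ((Real.sqrt 2)⁻¹) ^ i' := by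
    intro i hi i' hi'
    rw [Finset.mem_range] at hi hi'
    have hti : (l₁.take i).length = i := by
      rw [List.length_take, hlen₁]; omega
    have hti' : (l₂.take i').length = i' := by
      rw [List.length_take, hlen₂]; omega
    calc biIstar N (unifMu M m) (l₁.take i, l₂.take i')
        ≤ (1 / 2 : ℝ) ^ (min (max (l₁.take i).length (l₂.take i').length) M) :=
          biIstar_le M m _ _
      _ = (1 / 2 : ℝ) ^ (min (max i i') M) := by rw [hti, hti']
      _ ≤ _ := pointwise_bound M i i'
  have hsum : ∑ i ∈ Finset.range (M + j + 1), ∑ i' ∈ Finset.range (M + k + 1),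
      biIstar N (unifMu M m) (l₁.take i, l₂.take i') ≤
      ((M + j + 1) * (M + k + 1) : ℕ) * (1 / 2 : ℝ) ^ M + 16 := by
    calc ∑ i ∈ Finset.range (M + j + 1), ∑ i' ∈ Finset.range (M + k + 1),
        biIstar N (unifMu M m) (l₁.take i, l₂.take i')
        ≤ ∑ i ∈ Finset.range (M + j + 1), ∑ i' ∈ Finset.range (M + k + 1),
          ((1 / 2 : ℝ) ^ M + ((Real.sqrt 2)⁻¹) ^ i * ((Real.sqrt 2)⁻¹) ^ i') := by
          apply Finset.sum_le_sum
          intro i hi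
          apply Finset.sum_le_sum
          intro i' hi'
          exact hbound i hi i' hi'
      _ = ((M + j + 1) * (M + k + 1) : ℕ) * (1 / 2 : ℝ) ^ M +
          (∑ i ∈ Finset.range (M + j + 1), ((Real.sqrt 2)⁻¹) ^ i) *
          (∑ i' ∈ Finset.range (M + k + 1), ((Real.sqrt 2)⁻¹) ^ i') := by
          have inner : ∀ i : ℕ, ∑ i' ∈ Finset.range (M + k + 1),
              ((1 / 2 : ℝ) ^ M + ((Real.sqrt 2)⁻¹) ^ i * ((Real.sqrt 2)⁻¹) ^ i') =
              ((M + k + 1 : ℕ) : ℝ) * (1 / 2 : ℝ) ^ M +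
                ((Real.sqrt 2)⁻¹) ^ i * ∑ i' ∈ Finset.range (M + k + 1), ((Real.sqrt 2)⁻¹) ^ i' := by
            intro i
            rw [Finset.sum_add_distrib, Finset.sum_const, Finset.card_range, nsmul_eq_mul,
              ← Finset.mul_sum]
          simp only [inner]
          rw [Finset.sum_add_distrib, Finset.sum_const, Finset.card_range, nsmul_eq_mul,
            ← Finset.sum_mul]
          push_cast
          ring
      _ ≤ ((M + j + 1) * (M + k + 1) : ℕ) * (1 / 2 : ℝ) ^ M + 16 := by
          have g1 := geom_bound (M + j + 1)
          have g2 := geom_bound (M + k + 1)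
          have hge : (0:ℝ) ≤ ∑ i ∈ Finset.range (M + j + 1), ((Real.sqrt 2)⁻¹) ^ i := by
            apply Finset.sum_nonneg; intro i _; positivity
          have hge2 : (0:ℝ) ≤ ∑ i ∈ Finset.range (M + k + 1), ((Real.sqrt 2)⁻¹) ^ i := by
            apply Finset.sum_nonneg; intro i _; positivity
          have : (∑ i ∈ Finset.range (M + j + 1), ((Real.sqrt 2)⁻¹) ^ i) *
              (∑ i' ∈ Finset.range (M + k + 1), ((Real.sqrt 2)⁻¹) ^ i') ≤ 4 * 4 :=
            mul_le_mul g1 g2 hge2 (by norm_num)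
          linarith
  have h16 : (16:ℝ) ≤ (2:ℝ) ^ m / (2:ℝ) ^ M := by
    rw [le_div_iff₀ (by positivity)]
    calc (16:ℝ) * 2 ^ M = 2 ^ (M + 4) := by rw [pow_add]; ring
      _ ≤ 2 ^ m := by exact_mod_cast hM
  have hprod : ((M + j + 1) * (M + k + 1) : ℕ) * (1 / 2 : ℝ) ^ M ≤ (2:ℝ) ^ m / (2:ℝ) ^ M := by
    rw [div_pow, one_pow, mul_one_div]
    gcongr
    exact_mod_cast hjk
  calc _ ≤ ((M + j + 1) * (M + k + 1) : ℕ) * (1 / 2 : ℝ) ^ M + 16 := hsum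
    _ ≤ (2:ℝ) ^ m / (2:ℝ) ^ M + (2:ℝ) ^ m / (2:ℝ) ^ M := add_le_add hprod h16
    _ = 2 * (2:ℝ) ^ m / (2:ℝ) ^ M := by ring


/-- Counting lemma: number of grid pairs with small product. -/
lemma card_P (M m : ℕ) (hm : 4 * M + 4 ≤ m) :
    (m - 2 * M - 1) * 2 ^ (m - 2) ≤
      ((Finset.range (2 ^ m + 1) ×ˢ Finset.range (2 ^ m + 1)).filter
        (fun jk => (M + jk.1 + 1) * (M + jk.2 + 1) ≤ 2 ^ m)).card := by
  classical
  set D : Finset ((_ : ℕ) × ℕ × ℕ) := (Finset.Icc M (m - M - 2)).sigma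
      (fun s => Finset.range (2 ^ s) ×ˢ Finset.range (2 ^ (m - s - 2))) with hD
  have hcardD : D.card = (m - 2 * M - 1) * 2 ^ (m - 2) := by
    rw [hD, Finset.card_sigma]
    have hc : ∀ s ∈ Finset.Icc M (m - M - 2),
        (Finset.range (2 ^ s) ×ˢ Finset.range (2 ^ (m - s - 2))).card = 2 ^ (m - 2) := by
      intro s hs
      rw [Finset.mem_Icc] at hs
      rw [Finset.card_product, Finset.card_range, Finset.card_range, ← pow_add]
      congr 1
      omega
    rw [Finset.sum_congr rfl hc, Finset.sum_const, smul_eq_mul, Nat.card_Icc]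
    congr 1
    omega
  rw [← hcardD]
  apply Finset.card_le_card_of_injOn (fun x => (2 ^ x.1 + x.2.1 - (M + 1), x.2.2))
  · rintro ⟨s, t, k⟩ hx
    simp only [Finset.mem_coe, hD, Finset.mem_sigma, Finset.mem_Icc, Finset.mem_product,
      Finset.mem_range] at hx
    obtain ⟨⟨hsM, hsm⟩, ht, hk⟩ := hx
    have h2sM : M + 1 ≤ 2 ^ s :=
      le_trans (Nat.lt_two_pow_self (n := M)) (Nat.pow_le_pow_right (by norm_num) hsM)
    have hms : M ≤ m - s - 2 := by omega
    have hMms : M ≤ 2 ^ (m - s - 2) :=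
      le_trans (Nat.lt_two_pow_self (n := M)).le (Nat.pow_le_pow_right (by norm_num) hms)
    have e1 : M + (2 ^ s + t - (M + 1)) + 1 = 2 ^ s + t := by omega
    have h2half : 2 ^ (m - s - 2) + 2 ^ (m - s - 2) = 2 ^ (m - s - 1) := by
      rw [← two_mul, ← pow_succ']
      congr 1
      omega
    have hkb : M + k + 1 ≤ 2 ^ (m - s - 1) := by omega
    have hbig : 2 ^ (s + 1) * 2 ^ (m - s - 1) = 2 ^ m := by
      rw [← pow_add]; congr 1; omega
    have h2s1 : 2 ^ (s + 1) ≤ 2 ^ m := Nat.pow_le_pow_right (by norm_num) (by omega)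
    have h2ms2 : 2 ^ (m - s - 2) ≤ 2 ^ m := Nat.pow_le_pow_right (by norm_num) (by omega)
    have hps : 2 ^ (s + 1) = 2 ^ s + 2 ^ s := by rw [pow_succ]; omega
    simp only [Finset.mem_coe, Finset.mem_filter, Finset.mem_product, Finset.mem_range]
    refine ⟨⟨by omega, by omega⟩, ?_⟩
    have hmul : (2 ^ s + t) * (M + k + 1) ≤ (2 ^ (s + 1) - 1) * 2 ^ (m - s - 1) :=
      Nat.mul_le_mul (by omega) hkb
    have hlast : (2 ^ (s + 1) - 1) * 2 ^ (m - s - 1) ≤ 2 ^ m := by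
      rw [Nat.sub_mul, one_mul, hbig]
      omega
    calc (M + (2 ^ s + t - (M + 1)) + 1) * (M + k + 1)
        = (2 ^ s + t) * (M + k + 1) := by rw [e1]
      _ ≤ (2 ^ (s + 1) - 1) * 2 ^ (m - s - 1) := hmul
      _ ≤ 2 ^ m := hlast
  · rintro ⟨s, t, k⟩ hx ⟨s', t', k'⟩ hx' heq
    simp only [Finset.mem_coe, hD, Finset.mem_sigma, Finset.mem_Icc, Finset.mem_product,
      Finset.mem_range] at hx hx'
    obtain ⟨⟨hsM, hsm⟩, ht, hk⟩ := hx
    obtain ⟨⟨hsM', hsm'⟩, ht', hk'⟩ := hx'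
    have h2sM : M + 1 ≤ 2 ^ s :=
      le_trans (Nat.lt_two_pow_self (n := M)) (Nat.pow_le_pow_right (by norm_num) hsM)
    have h2sM' : M + 1 ≤ 2 ^ s' :=
      le_trans (Nat.lt_two_pow_self (n := M)) (Nat.pow_le_pow_right (by norm_num) hsM')
    simp only [Prod.mk.injEq] at heq
    obtain ⟨h1, h2⟩ := heq
    have hj : 2 ^ s + t = 2 ^ s' + t' := by omega
    have hs : s = s' := by
      by_contra hne
      rcases Nat.lt_or_ge s s' with h | h
      · have hle : 2 ^ (s + 1) ≤ 2 ^ s' := Nat.pow_le_pow_right (by norm_num) h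
        rw [pow_succ] at hle
        omega
      · have h' : s' < s := by omega
        have hle : 2 ^ (s' + 1) ≤ 2 ^ s := Nat.pow_le_pow_right (by norm_num) h'
        rw [pow_succ] at hle
        omega
    subst hs
    have ht2 : t = t' := by omega
    subst ht2
    subst h2
    rfl

end Stmt19Aux

/-- **Lower bound on the partial energy in the uniform diagonal construction**:
`∑_{α : V^μ(α) ≤ C·n·2^{−M}} (𝕀*μ(α))² ≥ c·2^{−M}·n·log₂ n` with `n = 2^m`. -/


theorem stmt19 : ∃ C c : ℝ, 0 < C ∧ 0 < c ∧ ∀ M : ℕ, 1 ≤ M → ∃ n₀ : ℕ, ∀ m : ℕ, n₀ ≤ 2 ^ m →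
    c * (2 : ℝ) ^ m * (m : ℝ) / (2 : ℝ) ^ M ≤
      biPartialEnergy (2 ^ m + M) (unifMu M m) (C * (2 : ℝ) ^ m / (2 : ℝ) ^ M) := by
  classical
  refine ⟨2, 1/8, by norm_num, by norm_num, ?_⟩
  intro M hM1
  refine ⟨2 ^ (4 * M + 4), ?_⟩
  intro m hm
  have hm4 : 4 * M + 4 ≤ m := (Nat.pow_le_pow_iff_right (by norm_num)).1 hm
  have hM4 : 2 ^ (M + 4) ≤ 2 ^ m :=
    le_trans (Nat.pow_le_pow_right (by norm_num) (by omega)) hm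
  set N := 2 ^ m + M with hN
  set P : Finset (ℕ × ℕ) := (Finset.range (2 ^ m + 1) ×ˢ Finset.range (2 ^ m + 1)).filter
      (fun jk => (M + jk.1 + 1) * (M + jk.2 + 1) ≤ 2 ^ m) with hP
  set φ : List Bool × ℕ × ℕ → List Bool × List Bool := fun x =>
      (x.1 ++ List.replicate x.2.1 false, x.1 ++ List.replicate x.2.2 false) with hφ
  set T : Finset (List Bool × List Bool) := (Stmt19Aux.lenLists M ×ˢ P).image φ with hT
  have hmemP : ∀ x ∈ Stmt19Aux.lenLists M ×ˢ P, x.1.length = M ∧ x.2.1 ≤ 2 ^ m ∧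
      x.2.2 ≤ 2 ^ m ∧ (M + x.2.1 + 1) * (M + x.2.2 + 1) ≤ 2 ^ m := by
    intro x hx
    rw [Finset.mem_product] at hx
    have h1 := Stmt19Aux.length_of_mem_lenLists hx.1
    have h2 := hx.2
    rw [hP, Finset.mem_filter, Finset.mem_product, Finset.mem_range, Finset.mem_range] at h2
    exact ⟨h1, by omega, by omega, h2.2⟩
  have hsub : T ⊆ (biVertices N).filter
      (fun p => biV N (unifMu M m) p ≤ 2 * (2:ℝ) ^ m / (2:ℝ) ^ M) := by
    intro p hp
    rw [hT, Finset.mem_image] at hp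
    obtain ⟨x, hx, rfl⟩ := hp
    obtain ⟨h1, h2, h3, h4⟩ := hmemP x hx
    rw [Finset.mem_filter]
    constructor
    · rw [biVertices, Finset.mem_product, Stmt19Aux.mem_strings, Stmt19Aux.mem_strings]
      constructor
      · simp only [hφ, List.length_append, List.length_replicate, h1, hN]
        omega
      · simp only [hφ, List.length_append, List.length_replicate, h1, hN]
        omega
    · exact Stmt19Aux.biV_le M m hM4 x.1 h1 h2 h3 h4
  have hsq : ∀ p ∈ T, ((1/2:ℝ) ^ M) ^ 2 ≤ (biIstar N (unifMu M m) p) ^ 2 := by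
    intro p hp
    rw [hT, Finset.mem_image] at hp
    obtain ⟨x, hx, rfl⟩ := hp
    obtain ⟨h1, h2, h3, -⟩ := hmemP x hx
    apply pow_le_pow_left₀ (by positivity)
    exact Stmt19Aux.biIstar_ge M m x.1 h1 h2 h3
  have hinj : Set.InjOn φ ↑(Stmt19Aux.lenLists M ×ˢ P) := by
    rintro ⟨a, j, k⟩ hx ⟨a', j', k'⟩ hx' heq
    obtain ⟨h1, -, -, -⟩ := hmemP _ (Finset.mem_coe.1 hx)
    obtain ⟨h1', -, -, -⟩ := hmemP _ (Finset.mem_coe.1 hx')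
    simp only [hφ, Prod.mk.injEq] at heq
    obtain ⟨e1, e2⟩ := heq
    have haa : a = a' ∧ List.replicate j false = List.replicate j' false :=
      List.append_inj e1 (by rw [h1, h1'])
    obtain ⟨rfl, hr⟩ := haa
    have hj : j = j' := by
      have := congrArg List.length hr
      simpa using this
    have hk : k = k' := by
      have := congrArg List.length (List.append_cancel_left e2)
      simpa using this
    subst hj; subst hk; rfl
  have hTcard : T.card = 2 ^ M * P.card := by
    rw [hT, Finset.card_image_of_injOn hinj, Finset.card_product, Stmt19Aux.card_lenLists]
  have hPcard : (m - 2 * M - 1) * 2 ^ (m - 2) ≤ P.card := Stmt19Aux.card_P M m hm4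
  have key : (T.card : ℝ) * ((1/2:ℝ) ^ M) ^ 2 ≤
      biPartialEnergy N (unifMu M m) (2 * (2:ℝ) ^ m / (2:ℝ) ^ M) := by
    rw [biPartialEnergy]
    calc (T.card : ℝ) * ((1/2:ℝ) ^ M) ^ 2 = ∑ _p ∈ T, ((1/2:ℝ) ^ M) ^ 2 := by
          rw [Finset.sum_const, nsmul_eq_mul]
      _ ≤ ∑ p ∈ T, (biIstar N (unifMu M m) p) ^ 2 := Finset.sum_le_sum hsq
      _ ≤ _ := Finset.sum_le_sum_of_subset_of_nonneg hsub (fun p _ _ => by positivity)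
  refine le_trans ?_ key
  -- numeric estimate
  have hmhalf : (m : ℝ) / 2 ≤ ((m - 2 * M - 1 : ℕ) : ℝ) := by
    have h : m ≤ 2 * (m - 2 * M - 1) := by omega
    have h' : (m : ℝ) ≤ 2 * ((m - 2 * M - 1 : ℕ) : ℝ) := by exact_mod_cast h
    linarith
  have hpow2 : (2:ℝ) ^ (m - 2) = (2:ℝ) ^ m / 4 := by
    have h4 : (4:ℝ) = 2 ^ 2 := by norm_num
    rw [eq_div_iff (by norm_num), h4, ← pow_add]
    congr 1
    omega
  have hPc : (m : ℝ) * (2:ℝ) ^ m / 8 ≤ (P.card : ℝ) := by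
    have hc : ((m - 2 * M - 1) * 2 ^ (m - 2) : ℕ) ≤ (P.card : ℝ) := by
      exact_mod_cast hPcard
    have hc2 : ((m - 2 * M - 1 : ℕ) : ℝ) * (2:ℝ) ^ (m - 2) ≤ (P.card : ℝ) := by
      push_cast at hc
      exact_mod_cast hc
    have hmul : (m : ℝ) / 2 * ((2:ℝ) ^ m / 4) ≤
        ((m - 2 * M - 1 : ℕ) : ℝ) * (2:ℝ) ^ (m - 2) := by
      rw [hpow2]
      apply mul_le_mul_of_nonneg_right hmhalf (by positivity)
    calc (m : ℝ) * (2:ℝ) ^ m / 8 = (m : ℝ) / 2 * ((2:ℝ) ^ m / 4) := by ring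
      _ ≤ ((m - 2 * M - 1 : ℕ) : ℝ) * (2:ℝ) ^ (m - 2) := hmul
      _ ≤ (P.card : ℝ) := hc2
  have hrhs : (T.card : ℝ) * ((1/2:ℝ) ^ M) ^ 2 = (P.card : ℝ) / (2:ℝ) ^ M := by
    rw [hTcard]
    push_cast
    rw [div_pow, one_pow]
    field_simp
  rw [hrhs]
  rw [div_le_div_iff₀ (by positivity) (by positivity)]
  calc 1 / 8 * (2:ℝ) ^ m * (m:ℝ) * (2:ℝ) ^ M = ((m : ℝ) * (2:ℝ) ^ m / 8) * (2:ℝ) ^ M := by ring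
    _ ≤ (P.card : ℝ) * (2:ℝ) ^ M := by
        apply mul_le_mul_of_nonneg_right hPc (by positivity)
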